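/- arXiv:1605.09302 — 2 statements merged into one kernel-verified Lean document; each statement's English description precedes it below -/
import Mathlib

section
/- Let n ≥ 2 and 1 ≤ r < n be integers. A homeomorphism h of 𝔠_{n,r} is pointwise canonical if and only if it belongs to H_{n,r,∼} and is densely canonical; that is, G_{n,r,pcn} = H_{n,r,∼} ∩ G_{n,r,dcn}. -/
open Set

namespace HigmanAut

/-- The one-sided infinite sequence space `𝔠_n` on `n` letters. -/
abbrev Cn (n : ℕ) : Type := ℕ → Fin n

/-- The Cantor space `𝔠_{n,r} = Fin r × (ℕ → Fin n)` (with the product topology,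
`Fin r` and `Fin n` discrete). -/
abbrev CNR (n r : ℕ) : Type := Fin r × Cn n

/-- A word: a letter from `Fin r` together with a finite list over `Fin n`. -/
abbrev Word (n r : ℕ) : Type := Fin r × List (Fin n)

/-- Self-homeomorphisms of `𝔠_{n,r}`. -/
abbrev Homeo (n r : ℕ) : Type := CNR n r ≃ₜ CNR n r

/-- Append a finite list to a word: `ν⌢w`. -/
def wApp {n r : ℕ} (ν : Word n r) (w : List (Fin n)) : Word n r := (ν.1, ν.2 ++ w)

/-- The point `ν⌢x` of `𝔠_{n,r}` determined by a word `ν` followed by `x ∈ 𝔠_n`. -/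
def wCat {n r : ℕ} (ν : Word n r) (x : Cn n) : CNR n r :=
  (ν.1, fun i => if h : i < ν.2.length then ν.2.get ⟨i, h⟩ else x (i - ν.2.length))

/-- The cone `U_ν` of a word `ν`. -/
def cone {n r : ℕ} (ν : Word n r) : Set (CNR n r) :=
  {p | p.1 = ν.1 ∧ ∀ (i : ℕ) (h : i < ν.2.length), p.2 i = ν.2.get ⟨i, h⟩}

/-- Membership in the Higman--Thompson group `G_{n,r}`: `g` is a prefix code map,
i.e. there are `k ≥ 1` and words `ν i`, `η i` whose cones partition `𝔠_{n,r}`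
with `g(ν i ⌢ x) = η i ⌢ x` for all `i`, `x`. -/
def IsHigman {n r : ℕ} (g : Homeo n r) : Prop :=
  ∃ k : ℕ, 0 < k ∧ ∃ ν η : Fin k → Word n r,
    (∀ p : CNR n r, ∃! i : Fin k, p ∈ cone (ν i)) ∧
    (∀ p : CNR n r, ∃! i : Fin k, p ∈ cone (η i)) ∧
    (∀ (i : Fin k) (x : Cn n), g (wCat (ν i) x) = wCat (η i) x)

/-- The Higman--Thompson group `G_{n,r}` as a set of homeomorphisms. -/
def higmanSet (n r : ℕ) : Set (Homeo n r) := {g | IsHigman g}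

/-- Conjugation: in the paper's right-action notation this is `g ↦ h⁻¹ g h`
(as a left function, `x ↦ h (g (h⁻¹ x))`). -/
def conjH {n r : ℕ} (h g : Homeo n r) : Homeo n r := (h.symm.trans g).trans h

/-- `h` acts in the same fashion on `U_α` and `U_β`: there are words `α'`, `β'`
and a common local action `f` with `h(α⌢x) = α'⌢f(x)` and `h(β⌢x) = β'⌢f(x)`. -/
def SameFashion {n r : ℕ} (h : Homeo n r) (α β : Word n r) : Prop :=
  ∃ (α' β' : Word n r) (f : Cn n → Cn n),
    (∀ x : Cn n, h (wCat α x) = wCat α' (f x)) ∧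
    (∀ x : Cn n, h (wCat β x) = wCat β' (f x))

/-- Tail equivalence on `𝔠_{n,r}`. -/
def TailEq {n r : ℕ} (x y : CNR n r) : Prop :=
  ∃ (ν η : Word n r) (z : Cn n), x = wCat ν z ∧ y = wCat η z

/-- `h` is pointwise canonical. -/
def PtwiseCanonical {n r : ℕ} (h : Homeo n r) : Prop :=
  ∀ x : CNR n r, ∃ (η₁ η₂ : Word n r) (y : Cn n), x = wCat η₁ y ∧ h x = wCat η₂ y

/-- `h` is densely canonical. -/
def DenselyCanonical {n r : ℕ} (h : Homeo n r) : Prop :=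
  ∀ U : Set (CNR n r), IsOpen U → U.Nonempty →
    ∃ η ζ : Word n r, cone η ⊆ U ∧ ∀ x : Cn n, h (wCat η x) = wCat ζ x

/-- `h` belongs to `H_{n,r,∼}`: `x ∼ y` iff `h(x) ∼ h(y)`. -/
def PreservesTailEq {n r : ℕ} (h : Homeo n r) : Prop :=
  ∀ x y : CNR n r, TailEq x y ↔ TailEq (h x) (h y)

/-- `ν` is a prefix of `η`, i.e. `U_η ⊆ U_ν`. -/
def WPrefix {n r : ℕ} (ν η : Word n r) : Prop := cone η ⊆ cone ν

/-- Two words are incomparable if neither is a prefix of the other. -/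
def Incomp {n r : ℕ} (ν η : Word n r) : Prop := ¬ WPrefix ν η ∧ ¬ WPrefix η ν

section Aux
variable {n r : ℕ}

lemma wCat_nil (c : Fin r) (u : Cn n) : wCat (n := n) (c, ([] : List (Fin n))) u = (c, u) := by
  unfold wCat; simp

lemma wCat_snd_ge (ν : Word n r) (z : Cn n) {i : ℕ} (hi : ν.2.length ≤ i) :
    (wCat ν z).2 i = z (i - ν.2.length) := by
  unfold wCat; simp only; rw [dif_neg (by omega)]

lemma wCat_snd_lt (ν : Word n r) (z : Cn n) {i : ℕ} (hi : i < ν.2.length) :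
    (wCat ν z).2 i = ν.2.get ⟨i, hi⟩ := by
  unfold wCat; simp only; rw [dif_pos hi]

lemma tail_shift (ν : Word n r) (z : Cn n) (d : ℕ) :
    wCat ν z = wCat (ν.1, ν.2 ++ List.ofFn (fun i : Fin d => z i)) (fun i => z (d + i)) := by
  have hlen : (ν.2 ++ List.ofFn (fun i : Fin d => z i)).length = ν.2.length + d := by simp
  apply Prod.ext
  · rfl
  · funext i
    show (wCat ν z).2 i = _
    rcases lt_trichotomy i ν.2.length with h | h | h
    · rw [wCat_snd_lt _ _ h, wCat_snd_lt _ _ (by omega : i < (ν.2 ++ List.ofFn (fun i : Fin d => z i)).length)]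
      simp only [List.get_eq_getElem]
      rw [List.getElem_append, dif_pos h]
    · subst h
      rcases Nat.eq_zero_or_pos d with hd | hd
      · subst hd
        rw [wCat_snd_ge _ _ le_rfl, wCat_snd_ge _ _ (by omega : (ν.2 ++ List.ofFn (fun i : Fin 0 => z i)).length ≤ ν.2.length)]
        simp [hlen]
      · rw [wCat_snd_ge _ _ le_rfl, wCat_snd_lt _ _ (by omega : ν.2.length < (ν.2 ++ List.ofFn (fun i : Fin d => z i)).length)]
        simp only [List.get_eq_getElem]
        rw [List.getElem_append, dif_neg (by omega)]
        simp
    · rw [wCat_snd_ge _ _ (le_of_lt h)]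
      by_cases h2 : i < ν.2.length + d
      · rw [wCat_snd_lt _ _ (by omega : i < (ν.2 ++ List.ofFn (fun i : Fin d => z i)).length)]
        simp only [List.get_eq_getElem]
        rw [List.getElem_append, dif_neg (by omega)]
        simp only [List.getElem_ofFn]
      · rw [wCat_snd_ge _ _ (by omega : (ν.2 ++ List.ofFn (fun i : Fin d => z i)).length ≤ i)]
        rw [hlen]; congr 1; omega

lemma tails_eq {η η' : Word n r} {z z' : Cn n} (hle : η.2.length ≤ η'.2.length)
    (heq : wCat η z = wCat η' z') : z' = fun i => z (η'.2.length - η.2.length + i) := by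
  funext i
  have := congrArg (fun p : CNR n r => p.2 (η'.2.length + i)) heq
  rw [wCat_snd_ge _ _ (by omega), wCat_snd_ge _ _ (by omega)] at this
  simp only [Nat.add_sub_cancel_left] at this
  rw [← this]; congr 1; omega

lemma tailEq_refl (x : CNR n r) : TailEq x x :=
  ⟨(x.1, []), (x.1, []), x.2, by rw [wCat_nil], by rw [wCat_nil]⟩

lemma tailEq_symm {x y : CNR n r} (h : TailEq x y) : TailEq y x := by
  obtain ⟨ν, η, z, h1, h2⟩ := h; exact ⟨η, ν, z, h2, h1⟩

lemma tailEq_trans {x y w : CNR n r} (h1 : TailEq x y) (h2 : TailEq y w) : TailEq x w := by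
  obtain ⟨ν, η, z, hx, hy⟩ := h1
  obtain ⟨η', ζ, z', hy', hw⟩ := h2
  have heq : wCat η z = wCat η' z' := by rw [← hy, ← hy']
  rcases le_total η.2.length η'.2.length with hle | hle
  · have hz' := tails_eq hle heq
    set d := η'.2.length - η.2.length
    refine ⟨(ν.1, ν.2 ++ List.ofFn (fun i : Fin d => z i)), ζ, z', ?_, hw⟩
    rw [hx, tail_shift ν z d, hz']
  · have hz := tails_eq hle heq.symm
    set d := η.2.length - η'.2.length
    refine ⟨ν, (ζ.1, ζ.2 ++ List.ofFn (fun i : Fin d => z' i)), z, hx, ?_⟩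
    rw [hw, tail_shift ζ z' d, hz]

lemma wCat_mem_cone (ν : Word n r) (x : Cn n) : wCat ν x ∈ cone ν := by
  refine ⟨rfl, fun i h => ?_⟩
  exact wCat_snd_lt ν x h

/-- The word given by the length-`m` prefix of `p`. -/
def listPre (p : CNR n r) (m : ℕ) : Word n r := (p.1, List.ofFn fun i : Fin m => p.2 i)

lemma mem_cone_listPre {p q : CNR n r} {m : ℕ} :
    q ∈ cone (listPre p m) ↔ q.1 = p.1 ∧ ∀ i < m, q.2 i = p.2 i := by
  constructor
  · rintro ⟨h1, h2⟩
    refine ⟨h1, fun i hi => ?_⟩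
    have := h2 i (by simp [listPre, hi])
    simpa [listPre] using this
  · rintro ⟨h1, h2⟩
    refine ⟨h1, fun i hi => ?_⟩
    have hi' : i < m := by simpa [listPre] using hi
    simp [listPre, h2 i hi']

lemma self_mem_cone_listPre (p : CNR n r) (m : ℕ) : p ∈ cone (listPre p m) :=
  mem_cone_listPre.2 ⟨rfl, fun _ _ => rfl⟩

lemma cone_listPre_mono (p : CNR n r) {m m' : ℕ} (h : m ≤ m') :
    cone (listPre p m') ⊆ cone (listPre p m) := by
  intro q hq
  rw [mem_cone_listPre] at hq ⊢
  exact ⟨hq.1, fun i hi => hq.2 i (lt_of_lt_of_le hi h)⟩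

/-- Cones around a point form a neighborhood basis. -/
lemma exists_cone_subset {V : Set (CNR n r)} (hV : IsOpen V) {p : CNR n r} (hp : p ∈ V) :
    ∃ m, cone (listPre p m) ⊆ V := by
  have hslice : IsOpen {q : Cn n | (p.1, q) ∈ V} :=
    hV.preimage (Continuous.prodMk_right p.1)
  have hmem : p.2 ∈ {q : Cn n | (p.1, q) ∈ V} := hp
  obtain ⟨I, u, hu, hsub⟩ := isOpen_pi_iff.1 hslice p.2 hmem
  refine ⟨I.sup id + 1, fun q hq => ?_⟩
  rw [mem_cone_listPre] at hq
  have hq2 : q.2 ∈ (I : Set ℕ).pi u := by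
    intro a ha
    have : a < I.sup id + 1 := Nat.lt_succ_of_le (Finset.le_sup (f := id) ha)
    rw [hq.2 a this]
    exact (hu a ha).2
  have : (p.1, q.2) ∈ V := hsub hq2
  have hqp : q = (p.1, q.2) := Prod.ext hq.1 rfl
  rw [hqp]; exact this

/-- The closed set of points where `h` shifts tails by offsets `a ↦ b`. -/
def tailSet (h : Homeo n r) (a b : ℕ) : Set (CNR n r) :=
  {p | ∀ i : ℕ, (h p).2 (b + i) = p.2 (a + i)}

lemma isClosed_tailSet (h : Homeo n r) (a b : ℕ) : IsClosed (tailSet h a b) := by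
  have : tailSet h a b = ⋂ i : ℕ, {p : CNR n r | (h p).2 (b + i) = p.2 (a + i)} := by
    ext p; simp [tailSet]
  rw [this]
  refine isClosed_iInter fun i => ?_
  exact isClosed_eq (((continuous_snd.comp h.continuous).comp continuous_id).comp continuous_id |>.comp continuous_id |> fun c => by exact (continuous_apply (b + i)).comp (continuous_snd.comp h.continuous)) ((continuous_apply (a + i)).comp continuous_snd)


lemma ptwise_to_dcn (h : Homeo n r) (hp : PtwiseCanonical h) : DenselyCanonical h := by
  haveI : BaireSpace (CNR n r) :=
    @BaireSpace.of_t2Space_locallyCompactSpace _ _ inferInstance inferInstance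
  intro U hU hne
  have hcover : ⋃ ab : ℕ × ℕ, tailSet h ab.1 ab.2 = univ := by
    apply eq_univ_of_forall
    intro p
    obtain ⟨η₁, η₂, y, h1, h2⟩ := hp p
    refine mem_iUnion.2 ⟨(η₁.2.length, η₂.2.length), fun i => ?_⟩
    have e1 : p.2 (η₁.2.length + i) = y i := by
      rw [h1, wCat_snd_ge _ _ (by omega)]; congr 1; omega
    have e2 : (h p).2 (η₂.2.length + i) = y i := by
      rw [h2, wCat_snd_ge _ _ (by omega)]; congr 1; omega
    simp only [e1, e2]
  have hdense := dense_iUnion_interior_of_closed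
    (fun ab : ℕ × ℕ => isClosed_tailSet h ab.1 ab.2) hcover
  obtain ⟨p₀, hp₀d, hp₀U⟩ := hdense.exists_mem_open hU hne
  obtain ⟨ab, hpi⟩ := mem_iUnion.1 hp₀d
  obtain ⟨a, b⟩ := ab
  set W : Set (CNR n r) := {q | (h q).1 = (h p₀).1 ∧ ∀ i < b, (h q).2 i = (h p₀).2 i} with hWdef
  have hWopen : IsOpen W := by
    have h1 : IsOpen {q : CNR n r | (h q).1 = (h p₀).1} := by
      have c1 : Continuous fun q : CNR n r => (h q).1 := continuous_fst.comp h.continuous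
      have := c1.isOpen_preimage {(h p₀).1} (isOpen_discrete _)
      exact this
    have h2 : ∀ i : ℕ, IsOpen {q : CNR n r | (h q).2 i = (h p₀).2 i} := by
      intro i
      have c2 : Continuous fun q : CNR n r => (h q).2 i :=
        (continuous_apply i).comp (continuous_snd.comp h.continuous)
      have := c2.isOpen_preimage {(h p₀).2 i} (isOpen_discrete _)
      exact this
    have : W = {q : CNR n r | (h q).1 = (h p₀).1} ∩ ⋂ i : Fin b, {q : CNR n r | (h q).2 i = (h p₀).2 i} := by
      ext q
      simp only [hWdef, mem_setOf_eq, mem_inter_iff, mem_iInter]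
      constructor
      · rintro ⟨hq1, hq2⟩; exact ⟨hq1, fun i => hq2 i i.2⟩
      · rintro ⟨hq1, hq2⟩; exact ⟨hq1, fun i hi => hq2 ⟨i, hi⟩⟩
    rw [this]
    exact h1.inter (isOpen_iInter_of_finite fun i => h2 i)
  have hW0 : p₀ ∈ W := ⟨rfl, fun _ _ => rfl⟩
  have hVopen : IsOpen (U ∩ interior (tailSet h a b) ∩ W) :=
    (hU.inter isOpen_interior).inter hWopen
  obtain ⟨m, hm⟩ := exists_cone_subset hVopen ⟨⟨hp₀U, hpi⟩, hW0⟩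
  set L := max m a with hL
  set η := listPre p₀ L with hη
  have hconesub : cone η ⊆ U ∩ interior (tailSet h a b) ∩ W :=
    (cone_listPre_mono p₀ (le_max_left m a)).trans hm
  have haL : a ≤ L := le_max_right m a
  set ζ : Word n r := ((h p₀).1,
    List.ofFn (fun i : Fin b => (h p₀).2 i) ++ List.ofFn (fun i : Fin (L - a) => p₀.2 (a + i))) with hζ
  have hζlen : ζ.2.length = b + (L - a) := by simp [hζ]
  have hηlen : η.2.length = L := by simp [hη, listPre]
  refine ⟨η, ζ, fun q hq => (hconesub hq).1.1, fun x => ?_⟩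
  set q := wCat η x with hq
  have hqc : q ∈ cone η := wCat_mem_cone η x
  have hqV := hconesub hqc
  have hqA : q ∈ tailSet h a b := interior_subset hqV.1.2
  have hqW : q ∈ W := hqV.2
  apply Prod.ext
  · exact hqW.1
  · funext j
    show (h q).2 j = (wCat ζ x).2 j
    rcases lt_or_ge j b with hj | hj
    · rw [hqW.2 j hj, wCat_snd_lt _ _ (by omega : j < ζ.2.length)]
      simp only [hζ, List.get_eq_getElem]
      rw [List.getElem_append, dif_pos (by simp; omega)]
      simp
    · have hbi : b + (j - b) = j := by omega
      have := hqA (j - b)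
      rw [hbi] at this
      rw [this]
      set i := j - b with hi
      rcases lt_or_ge (a + i) L with hai | hai
      · have hq2 : q.2 (a + i) = p₀.2 (a + i) := by
          rw [hq]
          rw [wCat_snd_lt _ _ (by omega : a + i < η.2.length)]
          simp [hη, listPre]
        rw [hq2, wCat_snd_lt _ _ (by omega : j < ζ.2.length)]
        simp only [hζ, List.get_eq_getElem]
        rw [List.getElem_append, dif_neg (by simp; omega)]
        simp only [List.getElem_ofFn, List.length_ofFn]
        rfl
      · have hq2 : q.2 (a + i) = x (a + i - L) := by
          rw [hq, wCat_snd_ge _ _ (by omega : η.2.length ≤ a + i), hηlen]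
        rw [hq2, wCat_snd_ge _ _ (by omega : ζ.2.length ≤ j), hζlen]
        congr 1
        omega

end Aux

/-- `G_{n,r,pcn} = H_{n,r,∼} ∩ G_{n,r,dcn}`. -/
theorem pcn_eq_Hsim_inter_dcn (n r : ℕ) (hn : 2 ≤ n) (hr1 : 1 ≤ r) (hrn : r < n)
    (h : Homeo n r) :
    PtwiseCanonical h ↔ PreservesTailEq h ∧ DenselyCanonical h := by
  constructor
  · intro hp
    have ts : ∀ x : CNR n r, TailEq x (h x) := by
      intro x
      obtain ⟨η₁, η₂, y, h1, h2⟩ := hp x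
      exact ⟨η₁, η₂, y, h1, h2⟩
    refine ⟨fun x y => ⟨fun hxy => ?_, fun hxy => ?_⟩, ptwise_to_dcn h hp⟩
    · exact tailEq_trans (tailEq_trans (tailEq_symm (ts x)) hxy) (ts y)
    · exact tailEq_trans (tailEq_trans (ts x) hxy) (tailEq_symm (ts y))
  · rintro ⟨hT, hD⟩ x
    have hne : (univ : Set (CNR n r)).Nonempty :=
      ⟨(⟨0, by omega⟩, fun _ => ⟨0, by omega⟩), mem_univ _⟩
    obtain ⟨η, ζ, -, hcan⟩ := hD univ isOpen_univ hne
    set y : CNR n r := wCat η x.2 with hy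
    have hxy : TailEq x y := ⟨(x.1, []), η, x.2, by rw [wCat_nil], rfl⟩
    have hyhy : TailEq y (h y) := ⟨η, ζ, x.2, rfl, hcan x.2⟩
    have hhxhy : TailEq (h x) (h y) := (hT x y).1 hxy
    have : TailEq (h x) x :=
      tailEq_trans (tailEq_trans hhxhy (tailEq_symm hyhy)) (tailEq_symm hxy)
    obtain ⟨ν, μ, z, h1, h2⟩ := this
    exact ⟨μ, ν, z, h2, h1⟩


end HigmanAut
end

section
/- Let n ≥ 2 and 1 ≤ r < n be integers and let σ be a permutation of Fin n. The σ-twist σ̂ : 𝔠_{n,r} → 𝔠_{n,r}, (c, x) ↦ (c, σ ∘ x), is a homeomorphism of 𝔠_{n,r} satisfying σ̂⁻¹ G_{n,r} σ̂ = G_{n,r}, so that g ↦ σ̂⁻¹ ∘ g ∘ σ̂ is an automorphism of G_{n,r}; moreover this automorphism is an inner automorphism of G_{n,r} if and only if σ is the identity permutation. -/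
open Set

namespace HigmanAut

variable {n r : ℕ}

def twist (σ : Equiv.Perm (Fin n)) : Homeo n r where
  toFun p := (p.1, fun i => σ (p.2 i))
  invFun p := (p.1, fun i => σ.symm (p.2 i))
  left_inv p := by simp
  right_inv p := by simp
  continuous_toFun := by
    refine Continuous.prodMk continuous_fst (continuous_pi fun i => ?_)
    exact (continuous_of_discreteTopology (f := (σ : Fin n → Fin n))).comp
      ((continuous_apply i).comp continuous_snd)
  continuous_invFun := by
    refine Continuous.prodMk continuous_fst (continuous_pi fun i => ?_)
    exact (continuous_of_discreteTopology (f := (σ.symm : Fin n → Fin n))).comp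
      ((continuous_apply i).comp continuous_snd)

lemma twist_apply (σ : Equiv.Perm (Fin n)) (p : CNR n r) :
    twist σ p = (p.1, fun i => σ (p.2 i)) := rfl

lemma twist_symm_apply (σ : Equiv.Perm (Fin n)) (p : CNR n r) :
    (twist (r := r) σ).symm p = (p.1, fun i => σ.symm (p.2 i)) := rfl

def mapW (σ : Equiv.Perm (Fin n)) (ν : Word n r) : Word n r := (ν.1, ν.2.map σ)

lemma twist_wCat (σ : Equiv.Perm (Fin n)) (ν : Word n r) (x : Cn n) :
    twist σ (wCat ν x) = wCat (mapW σ ν) (fun i => σ (x i)) := by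
  refine Prod.ext rfl ?_
  funext i
  simp only [twist_apply, wCat, mapW, List.length_map, apply_dite]
  split
  · next h => simp [List.get_eq_getElem, List.getElem_map]
  · rfl

lemma mem_cone_mapW (σ : Equiv.Perm (Fin n)) (ν : Word n r) (p : CNR n r) :
    p ∈ cone (mapW σ ν) ↔ (twist (r := r) σ).symm p ∈ cone ν := by
  simp only [cone, mapW, twist_symm_apply, List.length_map, mem_setOf_eq]
  constructor
  · rintro ⟨h1, h2⟩
    refine ⟨h1, fun i h => ?_⟩
    have := h2 i h
    simp at this
    simp [this]
  · rintro ⟨h1, h2⟩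
    refine ⟨h1, fun i h => ?_⟩
    have := h2 i h
    simp only [mapW, List.get_eq_getElem, List.getElem_map]
    have : σ (σ.symm (p.2 i)) = σ (ν.2.get ⟨i, h⟩) := congrArg σ this
    simpa using this

lemma conjH_apply (h g : Homeo n r) (p : CNR n r) :
    conjH h g p = h (g (h.symm p)) := rfl

lemma twist_symm_apply_twist (σ : Equiv.Perm (Fin n)) (p : CNR n r) :
    (twist (r := r) σ).symm (twist σ p) = p := (twist (r := r) σ).symm_apply_apply p

lemma isHigman_conjH_twist (σ : Equiv.Perm (Fin n)) (g : Homeo n r) (hg : IsHigman g) :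
    IsHigman (conjH (twist σ) g) := by
  obtain ⟨k, hk, ν, η, hν, hη, heq⟩ := hg
  refine ⟨k, hk, fun i => mapW σ (ν i), fun i => mapW σ (η i), ?_, ?_, ?_⟩
  · intro p
    obtain ⟨i, hi, hu⟩ := hν ((twist (r := r) σ).symm p)
    exact ⟨i, (mem_cone_mapW σ (ν i) p).2 hi,
      fun j hj => hu j ((mem_cone_mapW σ (ν j) p).1 hj)⟩
  · intro p
    obtain ⟨i, hi, hu⟩ := hη ((twist (r := r) σ).symm p)
    exact ⟨i, (mem_cone_mapW σ (η i) p).2 hi,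
      fun j hj => hu j ((mem_cone_mapW σ (η j) p).1 hj)⟩
  · intro i x
    have h1 : (twist (r := r) σ).symm (wCat (mapW σ (ν i)) x) = wCat (ν i) (fun j => σ.symm (x j)) := by
      have := twist_wCat (r := r) σ (ν i) (fun j => σ.symm (x j))
      have h2 : wCat (mapW σ (ν i)) (fun j => σ (σ.symm (x j))) = wCat (mapW σ (ν i)) x := by
        congr 1; funext j; simp
      rw [h2] at this
      rw [← this, twist_symm_apply_twist]
    rw [conjH_apply, h1, heq, twist_wCat]
    congr 1; funext j; simp

lemma conjH_twist_twist_inv (σ : Equiv.Perm (Fin n)) (g : Homeo n r) :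
    conjH (twist σ) (conjH (twist σ⁻¹) g) = g := by
  refine Homeomorph.toEquiv_injective (Equiv.ext fun p => ?_)
  show conjH (twist σ) (conjH (twist σ⁻¹) g) p = g p
  simp only [conjH_apply]
  rw [twist_symm_apply, twist_symm_apply]
  have e1 : ∀ q : CNR n r, twist (r := r) σ (twist σ⁻¹ q) = q := by
    intro q; rw [twist_apply, twist_apply]
    refine Prod.ext rfl ?_
    funext i; simp [Equiv.Perm.inv_def]
  have e2 : ((p.1, fun i => σ⁻¹.symm ((fun i => σ.symm (p.2 i)) i)) : CNR n r) = p := by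
    refine Prod.ext rfl ?_
    funext i; simp [Equiv.Perm.inv_def]
  rw [e2, e1]

lemma isClopen_cone (ν : Word n r) : IsClopen (cone ν) := by
  classical
  have hF : Continuous (fun p : CNR n r => (p.1, fun j : Fin ν.2.length => p.2 j)) := by
    refine Continuous.prodMk continuous_fst (continuous_pi fun j => ?_)
    exact (continuous_apply (j : ℕ)).comp continuous_snd
  have hs : cone ν = (fun p : CNR n r => (p.1, fun j : Fin ν.2.length => p.2 j)) ⁻¹'
      {(ν.1, fun j : Fin ν.2.length => ν.2.get j)} := by
    ext p
    simp only [cone, mem_setOf_eq, mem_preimage, mem_singleton_iff, Prod.mk.injEq, funext_iff]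
    constructor
    · rintro ⟨h1, h2⟩
      exact ⟨h1, fun j => h2 j j.isLt⟩
    · rintro ⟨h1, h2⟩
      exact ⟨h1, fun i h => h2 ⟨i, h⟩⟩
  rw [hs]
  exact (isClopen_discrete _).preimage hF

open scoped Classical in
noncomputable def swapAt (μ : Word n r) (τ : Equiv.Perm (Fin n)) (q : CNR n r) : CNR n r :=
  (q.1, fun i => if i = μ.2.length ∧ q ∈ cone μ then τ (q.2 i) else q.2 i)

lemma continuous_swapAt (μ : Word n r) (τ : Equiv.Perm (Fin n)) :
    Continuous (swapAt (r := r) μ τ) := by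
  classical
  refine Continuous.prodMk continuous_fst (continuous_pi fun i => ?_)
  by_cases hi : i = μ.2.length
  · have heq : (fun q : CNR n r => if i = μ.2.length ∧ q ∈ cone μ then τ (q.2 i) else q.2 i)
        = fun q : CNR n r => if q ∈ cone μ then τ (q.2 i) else q.2 i := by
      funext q; simp [hi]
    rw [heq]
    refine Continuous.if ?_ ?_ ?_
    · intro a ha
      have : frontier {a : CNR n r | a ∈ cone μ} = ∅ := (isClopen_cone μ).frontier_eq
      rw [this] at ha
      exact absurd ha (notMem_empty a)
    · exact (continuous_of_discreteTopology (f := (τ : Fin n → Fin n))).comp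
        ((continuous_apply i).comp continuous_snd)
    · exact (continuous_apply i).comp continuous_snd
  · have : (fun q : CNR n r =>
        if i = μ.2.length ∧ q ∈ cone μ then τ (q.2 i) else q.2 i)
        = fun q : CNR n r => q.2 i := by
      funext q; simp [hi]
    rw [this]
    exact (continuous_apply i).comp continuous_snd

lemma swapAt_mem_cone (μ : Word n r) (τ : Equiv.Perm (Fin n)) (q : CNR n r) :
    swapAt μ τ q ∈ cone μ ↔ q ∈ cone μ := by
  classical
  simp only [cone, swapAt, mem_setOf_eq]
  constructor
  · rintro ⟨h1, h2⟩
    refine ⟨h1, fun i h => ?_⟩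
    have := h2 i h
    rw [if_neg (by rintro ⟨rfl, -⟩; omega)] at this
    exact this
  · rintro ⟨h1, h2⟩
    refine ⟨h1, fun i h => ?_⟩
    rw [if_neg (by rintro ⟨rfl, -⟩; omega)]
    exact h2 i h

lemma swapAt_swapAt (μ : Word n r) (τ : Equiv.Perm (Fin n))
    (hτ : ∀ x, τ (τ x) = x) (q : CNR n r) : swapAt μ τ (swapAt μ τ q) = q := by
  classical
  have hm := swapAt_mem_cone μ τ q
  refine Prod.ext rfl ?_
  funext i
  show (if i = μ.2.length ∧ swapAt μ τ q ∈ cone μ then τ ((swapAt μ τ q).2 i)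
      else (swapAt μ τ q).2 i) = q.2 i
  by_cases hc : i = μ.2.length ∧ q ∈ cone μ
  · rw [if_pos ⟨hc.1, hm.2 hc.2⟩]
    show τ (if i = μ.2.length ∧ q ∈ cone μ then τ (q.2 i) else q.2 i) = q.2 i
    rw [if_pos hc, hτ]
  · have hc' : ¬ (i = μ.2.length ∧ swapAt μ τ q ∈ cone μ) := by
      rintro ⟨h1, h2⟩; exact hc ⟨h1, hm.1 h2⟩
    rw [if_neg hc']
    show (if i = μ.2.length ∧ q ∈ cone μ then τ (q.2 i) else q.2 i) = q.2 i
    rw [if_neg hc]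

noncomputable def swapHomeo (μ : Word n r) (τ : Equiv.Perm (Fin n))
    (hτ : ∀ x, τ (τ x) = x) : Homeo n r where
  toFun := swapAt μ τ
  invFun := swapAt μ τ
  left_inv := swapAt_swapAt μ τ hτ
  right_inv := swapAt_swapAt μ τ hτ
  continuous_toFun := continuous_swapAt μ τ
  continuous_invFun := continuous_swapAt μ τ

lemma swapAt_of_not_mem (μ : Word n r) (τ : Equiv.Perm (Fin n)) (q : CNR n r)
    (h : q ∉ cone μ) : swapAt μ τ q = q := by
  classical
  refine Prod.ext rfl ?_
  funext i
  show (if i = μ.2.length ∧ q ∈ cone μ then τ (q.2 i) else q.2 i) = q.2 i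
  rw [if_neg (by rintro ⟨-, h2⟩; exact h h2)]

lemma swapAt_snd_of_mem (μ : Word n r) (τ : Equiv.Perm (Fin n)) (q : CNR n r)
    (h : q ∈ cone μ) : (swapAt μ τ q).2 μ.2.length = τ (q.2 μ.2.length) := by
  classical
  show (if μ.2.length = μ.2.length ∧ q ∈ cone μ then τ (q.2 μ.2.length) else q.2 μ.2.length) = _
  rw [if_pos ⟨rfl, h⟩]

lemma mem_cone_ofFn {m : ℕ} (c : Fin r) (w : Fin m → Fin n) (p : CNR n r) :
    p ∈ cone ((c, List.ofFn w) : Word n r) ↔ p.1 = c ∧ ∀ j : Fin m, p.2 j = w j := by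
  simp only [cone, mem_setOf_eq, List.length_ofFn]
  constructor
  · rintro ⟨h1, h2⟩
    refine ⟨h1, fun j => ?_⟩
    have := h2 j j.isLt
    rwa [List.get_ofFn] at this
  · rintro ⟨h1, h2⟩
    refine ⟨h1, fun i h => ?_⟩
    rw [List.get_ofFn]
    exact h2 ⟨i, h⟩

lemma existsUnique_cone_ofFn {m k : ℕ} (e : Fin k ≃ Fin r × (Fin m → Fin n)) (p : CNR n r) :
    ∃! i : Fin k, p ∈ cone (((e i).1, List.ofFn (e i).2) : Word n r) := by
  refine ⟨e.symm (p.1, fun j => p.2 j), ?_, ?_⟩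
  · show p ∈ cone (_, List.ofFn _)
    rw [mem_cone_ofFn, e.apply_symm_apply]
    exact ⟨rfl, fun j => rfl⟩
  · intro j hj
    rw [mem_cone_ofFn] at hj
    have : e j = (p.1, fun j' : Fin m => p.2 j') := by
      refine Prod.ext hj.1.symm ?_
      funext j'
      exact (hj.2 j').symm
    rw [← this, e.symm_apply_apply]

lemma wCat_ofFn_apply {m : ℕ} (c : Fin r) (w : Fin m → Fin n) (x : Cn n) (i : ℕ) :
    (wCat ((c, List.ofFn w) : Word n r) x).2 i
      = if h : i < m then w ⟨i, h⟩ else x (i - m) := by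
  simp only [wCat, List.length_ofFn]
  split
  · next h => rw [List.get_ofFn]; congr 1
  · rfl

def Cnd (μ : Word n r) (c : Fin r) (w : Fin (μ.2.length + 1) → Fin n) : Prop :=
  c = μ.1 ∧ ∀ (j : ℕ) (hj : j < μ.2.length), w ⟨j, Nat.lt_succ_of_lt hj⟩ = μ.2.get ⟨j, hj⟩

open scoped Classical in
noncomputable def Fmap (μ : Word n r) (τ : Equiv.Perm (Fin n))
    (cw : Fin r × (Fin (μ.2.length + 1) → Fin n)) : Fin r × (Fin (μ.2.length + 1) → Fin n) :=
  (cw.1, fun j => if Cnd μ cw.1 cw.2 ∧ (j : ℕ) = μ.2.length then τ (cw.2 j) else cw.2 j)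

lemma Cnd_Fmap (μ : Word n r) (τ : Equiv.Perm (Fin n))
    (cw : Fin r × (Fin (μ.2.length + 1) → Fin n)) :
    Cnd μ (Fmap μ τ cw).1 (Fmap μ τ cw).2 ↔ Cnd μ cw.1 cw.2 := by
  classical
  simp only [Cnd, Fmap]
  constructor
  · rintro ⟨h1, h2⟩
    refine ⟨h1, fun j hj => ?_⟩
    have := h2 j hj
    simp only [show ¬ (j = μ.2.length) by omega, and_false, ↓reduceIte] at this; exact this
  · rintro ⟨h1, h2⟩
    refine ⟨h1, fun j hj => ?_⟩
    simp only [show ¬ (j = μ.2.length) by omega, and_false, ↓reduceIte]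
    exact h2 j hj

lemma Fmap_involutive (μ : Word n r) (τ : Equiv.Perm (Fin n)) (hτ : ∀ x, τ (τ x) = x) :
    Function.Involutive (Fmap μ τ) := by
  classical
  intro cw
  have hC := Cnd_Fmap μ τ cw
  refine Prod.ext rfl ?_
  funext j
  show (if Cnd μ (Fmap μ τ cw).1 (Fmap μ τ cw).2 ∧ (j : ℕ) = μ.2.length
      then τ ((Fmap μ τ cw).2 j) else (Fmap μ τ cw).2 j) = cw.2 j
  by_cases hc : Cnd μ cw.1 cw.2 ∧ (j : ℕ) = μ.2.length
  · rw [if_pos ⟨hC.2 hc.1, hc.2⟩]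
    show τ (if Cnd μ cw.1 cw.2 ∧ (j : ℕ) = μ.2.length then τ (cw.2 j) else cw.2 j) = cw.2 j
    rw [if_pos hc, hτ]
  · rw [if_neg (by rintro ⟨h1, h2⟩; exact hc ⟨hC.1 h1, h2⟩)]
    show (if Cnd μ cw.1 cw.2 ∧ (j : ℕ) = μ.2.length then τ (cw.2 j) else cw.2 j) = cw.2 j
    rw [if_neg hc]

lemma wCat_ofFn_mem_cone (μ : Word n r) (c : Fin r) (w : Fin (μ.2.length + 1) → Fin n)
    (x : Cn n) : wCat ((c, List.ofFn w) : Word n r) x ∈ cone μ ↔ Cnd μ c w := by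
  simp only [cone, mem_setOf_eq, Cnd]
  constructor
  · rintro ⟨h1, h2⟩
    refine ⟨h1, fun j hj => ?_⟩
    have := h2 j hj
    rwa [wCat_ofFn_apply, dif_pos (Nat.lt_succ_of_lt hj)] at this
  · rintro ⟨h1, h2⟩
    refine ⟨h1, fun j hj => ?_⟩
    rw [wCat_ofFn_apply, dif_pos (Nat.lt_succ_of_lt hj)]
    exact h2 j hj


lemma swapAt_wCat_ofFn (μ : Word n r) (τ : Equiv.Perm (Fin n))
    (cw : Fin r × (Fin (μ.2.length + 1) → Fin n)) (x : Cn n) :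
    swapAt μ τ (wCat ((cw.1, List.ofFn cw.2) : Word n r) x)
      = wCat (((Fmap μ τ cw).1, List.ofFn (Fmap μ τ cw).2) : Word n r) x := by
  classical
  have hmem := wCat_ofFn_mem_cone μ cw.1 cw.2 x
  refine Prod.ext rfl ?_
  funext i
  have hLHS : (swapAt μ τ (wCat ((cw.1, List.ofFn cw.2) : Word n r) x)).2 i
      = if i = μ.2.length ∧ wCat ((cw.1, List.ofFn cw.2) : Word n r) x ∈ cone μ
        then τ ((wCat ((cw.1, List.ofFn cw.2) : Word n r) x).2 i)
        else (wCat ((cw.1, List.ofFn cw.2) : Word n r) x).2 i := rfl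
  rw [hLHS]
  conv_rhs => rw [wCat_ofFn_apply]
  by_cases hi : i < μ.2.length + 1
  · rw [dif_pos hi]
    have hFval : (Fmap μ τ cw).2 ⟨i, hi⟩
        = if Cnd μ cw.1 cw.2 ∧ i = μ.2.length then τ (cw.2 ⟨i, hi⟩) else cw.2 ⟨i, hi⟩ := rfl
    rw [hFval]
    have hPi : (wCat ((cw.1, List.ofFn cw.2) : Word n r) x).2 i = cw.2 ⟨i, hi⟩ := by
      rw [wCat_ofFn_apply, dif_pos hi]
    rw [hPi]
    by_cases hiL : i = μ.2.length
    · by_cases hc : Cnd μ cw.1 cw.2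
      · rw [if_pos ⟨hiL, hmem.2 hc⟩, if_pos ⟨hc, hiL⟩]
      · rw [if_neg (fun hh => hc (hmem.1 hh.2)), if_neg (fun hh => hc hh.1)]
    · rw [if_neg (fun hh => hiL hh.1), if_neg (fun hh => hiL hh.2)]
  · rw [dif_neg hi]
    have hPi : (wCat ((cw.1, List.ofFn cw.2) : Word n r) x).2 i = x (i - (μ.2.length + 1)) := by
      rw [wCat_ofFn_apply, dif_neg hi]
    rw [if_neg (by rintro ⟨rfl, -⟩; omega), hPi]

lemma isHigman_swapHomeo (hn0 : 0 < n) (hr1 : 0 < r) (μ : Word n r)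
    (τ : Equiv.Perm (Fin n)) (hτ : ∀ x, τ (τ x) = x) :
    IsHigman (swapHomeo μ τ hτ) := by
  classical
  let E : Fin (r * n ^ (μ.2.length + 1)) ≃ Fin r × (Fin (μ.2.length + 1) → Fin n) :=
    (((Equiv.refl (Fin r)).prodCongr finFunctionFinEquiv).trans finProdFinEquiv).symm
  have hk : 0 < r * n ^ (μ.2.length + 1) :=
    Nat.mul_pos hr1 (Nat.pow_pos hn0)
  refine ⟨r * n ^ (μ.2.length + 1), hk, fun i => ((E i).1, List.ofFn (E i).2),
    fun i => ((Fmap μ τ (E i)).1, List.ofFn (Fmap μ τ (E i)).2), ?_, ?_, ?_⟩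
  · exact existsUnique_cone_ofFn E
  · exact existsUnique_cone_ofFn
      (E.trans (Function.Involutive.toPerm _ (Fmap_involutive μ τ hτ)))
  · intro i x
    exact swapAt_wCat_ofFn μ τ (E i) x

lemma isHigman_refl (hr1 : 0 < r) : IsHigman (Homeomorph.refl (CNR n r)) := by
  have hpart : ∀ p : CNR n r, ∃! i : Fin r, p ∈ cone ((i, ([] : List (Fin n))) : Word n r) := by
    intro p
    exact ⟨p.1, ⟨rfl, fun i h => absurd h (Nat.not_lt_zero i)⟩, fun j hj => hj.1.symm⟩
  exact ⟨r, hr1, fun i => (i, []), fun i => (i, []), hpart, hpart, fun i x => rfl⟩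

lemma exists_cone_sep {p q : CNR n r} (hpq : q ≠ p) :
    ∃ μ : Word n r, q ∈ cone μ ∧ p ∉ cone μ := by
  by_cases h1 : q.1 = p.1
  · have h2 : q.2 ≠ p.2 := fun h => hpq (Prod.ext h1 h)
    have hm : ∃ m, q.2 m ≠ p.2 m := by
      by_contra hc; push_neg at hc; exact h2 (funext hc)
    obtain ⟨m, hm⟩ := hm
    refine ⟨(q.1, List.ofFn fun j : Fin (m + 1) => q.2 j), ?_, ?_⟩
    · rw [mem_cone_ofFn]
      exact ⟨rfl, fun j => rfl⟩
    · intro hp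
      rw [mem_cone_ofFn] at hp
      exact hm (hp.2 ⟨m, Nat.lt_succ_self m⟩).symm
  · exact ⟨(q.1, []), ⟨rfl, fun i h => absurd h (Nat.not_lt_zero i)⟩,
      fun hp => h1 hp.1.symm⟩

lemma fix_of_commute (hn : 2 ≤ n) (hr1 : 0 < r) (H : Homeo n r)
    (hc : ∀ g : Homeo n r, IsHigman g → ∀ q : CNR n r, g (H q) = H (g q))
    (p : CNR n r) : H p = p := by
  classical
  by_contra hne
  obtain ⟨μ, hq, hp⟩ := exists_cone_sep (p := p) (q := H p) hne
  haveI : Nontrivial (Fin n) :=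
    ⟨⟨⟨0, by omega⟩, ⟨1, by omega⟩, by simp [Fin.ext_iff]⟩⟩
  obtain ⟨b, hb⟩ := exists_ne ((H p).2 μ.2.length)
  set a := (H p).2 μ.2.length with ha
  have hτ : ∀ x, Equiv.swap a b (Equiv.swap a b x) = x := fun x => Equiv.swap_apply_self a b x
  have hg := hc (swapHomeo μ (Equiv.swap a b) hτ)
    (isHigman_swapHomeo (by omega) hr1 μ (Equiv.swap a b) hτ) p
  have h1 : (swapHomeo (r := r) μ (Equiv.swap a b) hτ) p = p :=
    swapAt_of_not_mem μ (Equiv.swap a b) p hp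
  rw [h1] at hg
  have h4 : ((swapHomeo (r := r) μ (Equiv.swap a b) hτ) (H p)).2 μ.2.length = a := by
    rw [hg]
  have h5 : ((swapHomeo (r := r) μ (Equiv.swap a b) hτ) (H p)).2 μ.2.length = b := by
    show (swapAt μ (Equiv.swap a b) (H p)).2 μ.2.length = b
    rw [swapAt_snd_of_mem μ (Equiv.swap a b) (H p) hq, ← ha]
    exact Equiv.swap_apply_left a b
  exact hb (h5.symm.trans h4)

/-- The `σ`-twist is a homeomorphism of `𝔠_{n,r}` normalizing
`G_{n,r}`, and the induced automorphism `g ↦ σ̂⁻¹ g σ̂` of `G_{n,r}` is inner iff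
`σ` is the identity permutation. -/
theorem sigma_twist_automorphism (n r : ℕ) (hn : 2 ≤ n) (hr1 : 1 ≤ r) (hrn : r < n)
    (σ : Equiv.Perm (Fin n)) :
    ∃ tw : Homeo n r,
      (∀ p : CNR n r, tw p = (p.1, fun i => σ (p.2 i))) ∧
      conjH tw '' higmanSet n r = higmanSet n r ∧
      ((∃ g₀ : Homeo n r, IsHigman g₀ ∧
          ∀ g : Homeo n r, IsHigman g → conjH tw g = conjH g₀ g) ↔ σ = 1) := by
  classical
  refine ⟨twist σ, fun p => rfl, ?_, ?_⟩
  · ext g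
    constructor
    · rintro ⟨g', hg', rfl⟩
      exact isHigman_conjH_twist σ g' hg'
    · intro hg
      exact ⟨conjH (twist σ⁻¹) g, isHigman_conjH_twist σ⁻¹ g hg, conjH_twist_twist_inv σ g⟩
  · constructor
    · rintro ⟨g₀, hg₀, hconj⟩
      have hcomm : ∀ g : Homeo n r, IsHigman g → ∀ q : CNR n r,
          g ((g₀.trans (twist σ).symm) q) = (g₀.trans (twist σ).symm) (g q) := by
        intro g hg q
        have h2 : conjH (twist σ) g (g₀ q) = conjH g₀ g (g₀ q) := by rw [hconj g hg]
        rw [conjH_apply, conjH_apply, g₀.symm_apply_apply] at h2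
        have h3 := congrArg (twist (r := r) σ).symm h2
        rw [(twist (r := r) σ).symm_apply_apply] at h3
        exact h3
      have hfix := fun p => fix_of_commute hn (by omega) (g₀.trans (twist σ).symm) hcomm p
      have hg₀tw : ∀ p : CNR n r, g₀ p = twist σ p := by
        intro p
        have h2 := congrArg (twist (r := r) σ) (hfix p)
        rwa [show (g₀.trans (twist (r := r) σ).symm) p = (twist (r := r) σ).symm (g₀ p) from rfl,
          (twist (r := r) σ).apply_symm_apply] at h2
      obtain ⟨k, hk, ν, η, -, -, heq⟩ := hg₀
      have hσ : ∀ a : Fin n, σ a = a := by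
        intro a
        have h2 : twist σ (wCat (ν ⟨0, hk⟩) (fun _ => a)) = wCat (η ⟨0, hk⟩) (fun _ => a) :=
          (hg₀tw _).symm.trans (heq ⟨0, hk⟩ (fun _ => a))
        have h3 : σ ((wCat (ν ⟨0, hk⟩) (fun _ => a)).2
              ((ν ⟨0, hk⟩).2.length + (η ⟨0, hk⟩).2.length))
            = (wCat (η ⟨0, hk⟩) (fun _ => a)).2
              ((ν ⟨0, hk⟩).2.length + (η ⟨0, hk⟩).2.length) :=
          congrArg (fun q : CNR n r => q.2 ((ν ⟨0, hk⟩).2.length + (η ⟨0, hk⟩).2.length)) h2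
        have hv : (wCat (ν ⟨0, hk⟩) (fun _ : ℕ => a)).2
            ((ν ⟨0, hk⟩).2.length + (η ⟨0, hk⟩).2.length) = a := by
          show (if h : _ < (ν ⟨0, hk⟩).2.length then _ else _) = a
          rw [dif_neg (by omega)]
        have hw : (wCat (η ⟨0, hk⟩) (fun _ : ℕ => a)).2
            ((ν ⟨0, hk⟩).2.length + (η ⟨0, hk⟩).2.length) = a := by
          show (if h : _ < (η ⟨0, hk⟩).2.length then _ else _) = a
          rw [dif_neg (by omega)]
        rw [hv, hw] at h3
        exact h3
      exact Equiv.ext fun a => by simp [hσ a]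
    · rintro rfl
      refine ⟨Homeomorph.refl _, isHigman_refl (by omega), fun g hg => ?_⟩
      refine Homeomorph.toEquiv_injective (Equiv.ext fun p => ?_)
      have e1 : ∀ q : CNR n r, twist (r := r) (1 : Equiv.Perm (Fin n)) q = q := by
        intro q
        rw [twist_apply]
        refine Prod.ext rfl ?_
        funext i; simp
      have e2 : ∀ q : CNR n r, (twist (r := r) (1 : Equiv.Perm (Fin n))).symm q = q := by
        intro q
        rw [twist_symm_apply]
        refine Prod.ext rfl ?_
        funext i; simp; rfl
      show twist (1 : Equiv.Perm (Fin n)) (g ((twist (r := r) (1 : Equiv.Perm (Fin n))).symm p))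
          = (Homeomorph.refl _) (g ((Homeomorph.refl (CNR n r)).symm p))
      rw [e1, e2]
      rfl


end HigmanAut
end
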